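/- Let X ≥ 0 be a geometric random variable with P[X ≥ k] = 2^{-k} for all integers k ≥ 0. Let (Z_k)_{k≥1} be a sequence of random vectors in ℝ^d with uniformly bounded norms, independent of X, and define the truncated randomized series Y = Σ_{k=1}^{X} 2^k Z_k. Then E[Y] = Σ_{k=1}^{∞} E[Z_k], provided the right-hand side converges absolutely. -/

import Mathlib

open MeasureTheory ProbabilityTheory

/-- The unbiased geometric truncation trick: if `P[X ≥ k] = 2^{-k}`, the `Z_k` are uniformly
bounded and independent of `X`, and `Σ_k E[‖Z_k‖]` converges, then
`E[Σ_{k=1}^X 2^k Z_k] = Σ_{k=1}^∞ E[Z_k]`. -/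
theorem stmt17 {Ω : Type*} [MeasurableSpace Ω] (μ : Measure Ω) [IsProbabilityMeasure μ]
    (d : ℕ) (X : Ω → ℕ) (hX : Measurable X)
    (hgeom : ∀ k : ℕ, μ {ω | k ≤ X ω} = ENNReal.ofReal ((1/2 : ℝ) ^ k))
    (Z : ℕ → Ω → Fin d → ℝ) (hZmeas : ∀ k, Measurable (Z k))
    (Cb : ℝ) (hbd : ∀ k ω, ‖Z k ω‖ ≤ Cb)
    (hindep : IndepFun X (fun ω => fun k => Z k ω) μ)
    (hsum : Summable (fun k : ℕ => ∫ ω, ‖Z (k + 1) ω‖ ∂μ)) :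
    ∫ ω, (∑ k ∈ Finset.Icc 1 (X ω), (2 : ℝ) ^ k • Z k ω) ∂μ =
      ∑' k : ℕ, ∫ ω, Z (k + 1) ω ∂μ := by
  classical
  set A : ℕ → Set Ω := fun k => {ω | k ≤ X ω} with hA
  have hAmeas : ∀ k, MeasurableSet (A k) := fun k => hX measurableSet_Ici
  have hZint : ∀ k, Integrable (Z k) μ := fun k =>
    ⟨(hZmeas k).aestronglyMeasurable,
      (HasFiniteIntegral.of_bounded (C := Cb) (Filter.Eventually.of_forall (hbd k)))⟩
  -- scalar independence
  have hIndepScalar : ∀ (k : ℕ) (g : (Fin d → ℝ) → ℝ), Measurable g →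
      IndepFun (fun ω => (A k).indicator (fun _ => (1:ℝ)) ω) (fun ω => g (Z k ω)) μ := by
    intro k g hg
    have hφ : Measurable (fun n : ℕ => if k ≤ n then (1:ℝ) else 0) := by
      exact measurable_from_top
    have := hindep.comp (φ := fun n : ℕ => if k ≤ n then (1:ℝ) else 0)
      (ψ := fun v : ℕ → Fin d → ℝ => g (v k)) hφ (hg.comp (measurable_pi_apply k))
    convert this using 2 with ω
    simp [Set.indicator_apply, A, Function.comp]
    rfl
  -- key: ∫ indicator • g∘Z = (1/2)^k * ∫ g∘Z
  have hp : ∀ k, ∫ ω, (A k).indicator (fun _ : Ω => (1:ℝ)) ω ∂μ = (1/2:ℝ)^k := by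
    intro k
    have : ∫ ω, (A k).indicator (1 : Ω → ℝ) ω ∂μ = (μ (A k)).toReal :=
      integral_indicator_one (hAmeas k)
    rw [show (fun _ : Ω => (1:ℝ)) = (1 : Ω → ℝ) from rfl, this, hA, hgeom k,
      ENNReal.toReal_ofReal (by positivity)]
  have hkeyScalar : ∀ (k : ℕ) (g : (Fin d → ℝ) → ℝ), Measurable g →
      ∫ ω, (A k).indicator (fun ω => g (Z k ω)) ω ∂μ = (1/2:ℝ)^k * ∫ ω, g (Z k ω) ∂μ := by
    intro k g hg
    have h1 : (fun ω => (A k).indicator (fun ω => g (Z k ω)) ω)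
        = (fun ω => (A k).indicator (fun _ => (1:ℝ)) ω) * (fun ω => g (Z k ω)) := by
      funext ω
      by_cases h : ω ∈ A k <;> simp [Set.indicator_apply, h]
    rw [h1, (hIndepScalar k g hg).integral_mul_eq_mul_integral
      ((measurable_one.indicator (hAmeas k)).aestronglyMeasurable)
      ((hg.comp (hZmeas k)).aestronglyMeasurable), hp]
  -- vector version
  have hkeyVec : ∀ k : ℕ, ∫ ω, (A k).indicator (Z k) ω ∂μ = ((1/2:ℝ)^k) • ∫ ω, Z k ω ∂μ := by
    intro k
    funext i
    have hint : Integrable ((A k).indicator (Z k)) μ := (hZint k).indicator (hAmeas k)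
    have h1 : (∫ ω, (A k).indicator (Z k) ω ∂μ) i
        = ∫ ω, ((A k).indicator (Z k) ω) i ∂μ :=
      (ContinuousLinearMap.integral_comp_comm (ContinuousLinearMap.proj (R := ℝ)
        (φ := fun _ : Fin d => ℝ) i) hint).symm
    have h2 : (∫ ω, Z k ω ∂μ) i = ∫ ω, Z k ω i ∂μ :=
      (ContinuousLinearMap.integral_comp_comm (ContinuousLinearMap.proj (R := ℝ)
        (φ := fun _ : Fin d => ℝ) i) (hZint k)).symm
    have h3 : (fun ω => ((A k).indicator (Z k) ω) i)
        = fun ω => (A k).indicator (fun ω => Z k ω i) ω := by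
      funext ω; by_cases h : ω ∈ A k <;> simp [Set.indicator_apply, h]
    rw [Pi.smul_apply, h1, h3, h2, smul_eq_mul,
      hkeyScalar k (fun v => v i) (measurable_pi_apply i)]
  -- norm version
  have hkeyNorm : ∀ k : ℕ, ∫ ω, (A k).indicator (fun ω => ‖Z k ω‖) ω ∂μ
      = (1/2:ℝ)^k * ∫ ω, ‖Z k ω‖ ∂μ :=
    fun k => hkeyScalar k (fun v => ‖v‖) measurable_norm
  -- The series terms
  set F : ℕ → Ω → (Fin d → ℝ) :=
    fun k ω => (A (k+1)).indicator (fun ω => (2:ℝ)^(k+1) • Z (k+1) ω) ω with hF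
  have hFint : ∀ k, Integrable (F k) μ := fun k =>
    (((hZint (k+1)).smul ((2:ℝ)^(k+1)))).indicator (hAmeas (k+1))
  have hFval : ∀ k, ∫ ω, F k ω ∂μ = ∫ ω, Z (k+1) ω ∂μ := by
    intro k
    have : F k = fun ω => (2:ℝ)^(k+1) • (A (k+1)).indicator (Z (k+1)) ω := by
      rw [hF]; exact Set.indicator_const_smul (A (k+1)) ((2:ℝ)^(k+1)) (Z (k+1))
    have hone : (2:ℝ)^(k+1) * (1/2:ℝ)^(k+1) = 1 := by
      rw [one_div, inv_pow, mul_inv_cancel₀ (by positivity)]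
    rw [this, integral_smul, hkeyVec, smul_smul, hone, one_smul]
  have hFnorm : ∀ k, ∫ ω, ‖F k ω‖ ∂μ = ∫ ω, ‖Z (k+1) ω‖ ∂μ := by
    intro k
    have h1 : (fun ω => ‖F k ω‖)
        = fun ω => (2:ℝ)^(k+1) * (A (k+1)).indicator (fun ω => ‖Z (k+1) ω‖) ω := by
      funext ω
      by_cases h : ω ∈ A (k+1) <;>
        simp [hF, Set.indicator_apply, h, norm_smul, abs_of_pos, mul_comm]
    have hone : (2:ℝ)^(k+1) * (1/2:ℝ)^(k+1) = 1 := by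
      rw [one_div, inv_pow, mul_inv_cancel₀ (by positivity)]
    rw [h1, integral_const_mul, hkeyNorm, ← mul_assoc, hone, one_mul]
  -- pointwise identity
  have hptwise : ∀ ω, (∑ k ∈ Finset.Icc 1 (X ω), (2 : ℝ) ^ k • Z k ω) = ∑' k, F k ω := by
    intro ω
    rw [tsum_eq_sum (s := Finset.range (X ω)) (f := fun k => F k ω)
      (by
        intro b hb
        simp only [Finset.mem_range, not_lt] at hb
        have : ω ∉ A (b+1) := by simp [A]; omega
        simp [hF, Set.indicator_of_notMem this])]
    rw [show Finset.Icc 1 (X ω) = Finset.map ⟨fun n => n + 1, fun a b h => by simpa using h⟩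
        (Finset.range (X ω)) from by
      ext x
      simp only [Finset.mem_Icc, Finset.mem_map, Finset.mem_range,
        Function.Embedding.coeFn_mk]
      constructor
      · rintro ⟨h1, h2⟩; exact ⟨x - 1, by omega, by show x - 1 + 1 = x; omega⟩
      · rintro ⟨a, ha, rfl⟩; show 1 ≤ a + 1 ∧ a + 1 ≤ X ω; omega]
    rw [Finset.sum_map]
    refine Finset.sum_congr rfl (fun i hi => ?_)
    simp only [Finset.mem_range] at hi
    have : ω ∈ A (i+1) := by simp [A]; omega
    simp [hF, Set.indicator_of_mem this, Function.Embedding.coeFn_mk]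
    rfl
  -- summability in ℝ≥0∞
  have hlint : ∑' k, ∫⁻ ω, ‖F k ω‖₊ ∂μ ≠ ⊤ := by
    have heq : ∀ k, ∫⁻ ω, ‖F k ω‖₊ ∂μ = ENNReal.ofReal (∫ ω, ‖Z (k+1) ω‖ ∂μ) := by
      intro k
      rw [← hFnorm]; exact (ofReal_integral_norm_eq_lintegral_enorm (hFint k)).symm
    simp_rw [heq]
    rw [← ENNReal.ofReal_tsum_of_nonneg (fun n => integral_nonneg (fun ω => norm_nonneg _)) hsum]
    exact ENNReal.ofReal_ne_top
  calc ∫ ω, (∑ k ∈ Finset.Icc 1 (X ω), (2 : ℝ) ^ k • Z k ω) ∂μ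
      = ∫ ω, ∑' k, F k ω ∂μ := by simp_rw [hptwise]
    _ = ∑' k, ∫ ω, F k ω ∂μ :=
        integral_tsum (fun k => (hFint k).aestronglyMeasurable) hlint
    _ = ∑' k : ℕ, ∫ ω, Z (k + 1) ω ∂μ := by simp_rw [hFval]
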